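/- (Hypergeometric Picard–Fuchs equation.) The function I_0 is twice differentiable on (0, ∞), and for every h > 0 its second derivative I_0''(h) satisfies 4h·(4h + 1)·I_0''(h) = −3·I_0(h). -/

import Mathlib

open Real Set Filter intervalIntegral

/-- Right endpoint of the exterior oval: `x_max(h) = √(1 + √(1+4h))`. -/
noncomputable def xmax (h : ℝ) : ℝ := Real.sqrt (1 + Real.sqrt (1 + 4*h))

/-- Complete elliptic integral `I_i(h) = ∫_{-x_max}^{x_max} x^i √(2h + x² - x⁴/2) dx`. -/
noncomputable def ellI (i : ℕ) (h : ℝ) : ℝ :=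
  ∫ x in (-xmax h)..(xmax h), x^i * Real.sqrt (2*h + x^2 - x^4/2)

/-- Complete elliptic integral `I'_i(h) = ∫_{-x_max}^{x_max} x^i (2h + x² - x⁴/2)^{-1/2} dx`. -/
noncomputable def ellI' (i : ℕ) (h : ℝ) : ℝ :=
  ∫ x in (-xmax h)..(xmax h), x^i / Real.sqrt (2*h + x^2 - x^4/2)

noncomputable def ss (h : ℝ) : ℝ := Real.sqrt (1 + 4*h)

noncomputable def uu (h θ : ℝ) : ℝ := (1 + ss h) * Real.sin θ ^ 2 + (ss h - 1)

noncomputable def PP (i : ℕ) (h : ℝ) : ℝ :=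
  ∫ θ in (-(π/2))..(π/2), Real.sin θ ^ i * Real.cos θ ^ 2 * Real.sqrt (uu h θ)

noncomputable def QQ (i : ℕ) (h : ℝ) : ℝ :=
  ∫ θ in (-(π/2))..(π/2), Real.sin θ ^ i / Real.sqrt (uu h θ)

noncomputable def RR (i : ℕ) (h : ℝ) : ℝ :=
  ∫ θ in (-(π/2))..(π/2),
    Real.sin θ ^ i * Real.cos θ ^ 2 * (1 + Real.sin θ ^ 2) / Real.sqrt (uu h θ)

lemma ss_sq {h : ℝ} (hh : 0 < h) : ss h ^ 2 = 1 + 4*h :=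
  Real.sq_sqrt (by linarith)

lemma ss_gt_one {h : ℝ} (hh : 0 < h) : 1 < ss h := by
  have : (1:ℝ) < 1 + 4*h := by linarith
  calc (1:ℝ) = Real.sqrt 1 := (Real.sqrt_one).symm
  _ < ss h := by exact Real.sqrt_lt_sqrt (by norm_num) this

lemma ss_pos {h : ℝ} (hh : 0 < h) : 0 < ss h := lt_trans one_pos (ss_gt_one hh)

lemma ss_mono {x y : ℝ} (hxy : x ≤ y) : ss x ≤ ss y :=
  Real.sqrt_le_sqrt (by linarith)

lemma uu_pos {h : ℝ} (hh : 0 < h) (θ : ℝ) : 0 < uu h θ := by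
  have h1 := ss_gt_one hh
  have : 0 ≤ (1 + ss h) * Real.sin θ ^ 2 := by positivity
  unfold uu; linarith

lemma sqrt_uu_pos {h : ℝ} (hh : 0 < h) (θ : ℝ) : 0 < Real.sqrt (uu h θ) :=
  Real.sqrt_pos.2 (uu_pos hh θ)

lemma xmax_sq (h : ℝ) : xmax h ^ 2 = 1 + ss h := by
  unfold xmax ss
  exact Real.sq_sqrt (by positivity)

lemma xmax_pos {h : ℝ} (hh : 0 < h) : 0 < xmax h :=
  Real.sqrt_pos.2 (by have := Real.sqrt_nonneg (1+4*h); unfold ss at *; linarith)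

lemma hasDerivAt_ss {h : ℝ} (hh : 0 < h) : HasDerivAt ss (2 / ss h) h := by
  have h1 : (0:ℝ) < 1 + 4*h := by linarith
  have h2 : HasDerivAt (fun x : ℝ => 1 + 4*x) 4 h := by
    simpa using ((hasDerivAt_id h).const_mul 4).const_add 1
  have h3 := (Real.hasDerivAt_sqrt (ne_of_gt h1)).comp h h2
  refine h3.congr_deriv ?_
  symm
  unfold ss
  field_simp
  ring

lemma key_fact {h : ℝ} (hh : 0 < h) (x : ℝ) :
    2*h + x^2 - x^4/2 = (1 + ss h - x^2) * (x^2 + ss h - 1) / 2 := by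
  have := ss_sq hh
  nlinarith [this]

lemma cont_uu (h : ℝ) : Continuous (uu h) := by
  unfold uu; continuity

lemma cont_sqrt_uu (h : ℝ) : Continuous (fun θ => Real.sqrt (uu h θ)) :=
  Real.continuous_sqrt.comp (cont_uu h)

lemma ellI_eq (i : ℕ) {h : ℝ} (hh : 0 < h) :
    ellI i h = xmax h ^ (i+2) / Real.sqrt 2 * PP i h := by
  have hg : Continuous (fun x : ℝ => x^i * Real.sqrt (2*h + x^2 - x^4/2)) := by
    apply Continuous.mul (by continuity)
    exact Real.continuous_sqrt.comp (by continuity)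
  have hf : ∀ θ ∈ uIcc (-(π/2)) (π/2),
      HasDerivAt (fun θ => xmax h * Real.sin θ) (xmax h * Real.cos θ) θ :=
    fun θ _ => (Real.hasDerivAt_sin θ).const_mul (xmax h)
  have hf' : ContinuousOn (fun θ => xmax h * Real.cos θ) (uIcc (-(π/2)) (π/2)) :=
    Continuous.continuousOn (by continuity)
  have cov := intervalIntegral.integral_comp_smul_deriv hf hf' hg
  have hend : ellI i h =
      ∫ θ in (-(π/2))..(π/2), (xmax h * Real.cos θ) •
        ((fun x : ℝ => x^i * Real.sqrt (2*h + x^2 - x^4/2)) ∘ (fun θ => xmax h * Real.sin θ)) θ := by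
    rw [cov]
    simp [ellI, Real.sin_pi_div_two]
  rw [hend, PP, ← intervalIntegral.integral_const_mul]
  apply intervalIntegral.integral_congr
  intro θ hθ
  have hθ' : θ ∈ Icc (-(π/2)) (π/2) := by
    rwa [uIcc_of_le (by linarith [Real.pi_pos] : -(π/2) ≤ π/2)] at hθ
  have hcos : 0 ≤ Real.cos θ := Real.cos_nonneg_of_mem_Icc hθ'
  have ha := xmax_pos hh
  have hu := (uu_pos hh θ).le
  simp only [Function.comp_apply, smul_eq_mul]
  have hp : 2*h + (xmax h * Real.sin θ)^2 - (xmax h * Real.sin θ)^4/2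
      = (xmax h * Real.cos θ)^2 * (uu h θ) / 2 := by
    have h2 := xmax_sq h
    have hsc := Real.sin_sq_add_cos_sq θ
    have hx2 : (xmax h * Real.sin θ)^2 = (1 + ss h) * Real.sin θ^2 := by
      rw [mul_pow, h2]
    rw [key_fact hh, hx2]
    simp only [uu]
    linear_combination
      (-(((1+ss h)*Real.sin θ^2 + (ss h - 1)))/2*(1+ss h))*hsc
      + (-(((1+ss h)*Real.sin θ^2 + (ss h - 1)))/2*Real.cos θ^2)*h2
  rw [hp]
  rw [show (xmax h * Real.cos θ)^2 * (uu h θ) / 2 = (xmax h * Real.cos θ)^2 * ((uu h θ)/2) by ring]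
  rw [Real.sqrt_mul (sq_nonneg _), Real.sqrt_sq (by positivity), Real.sqrt_div hu 2]
  rw [mul_pow, pow_add]
  ring

lemma frac_eq {v u p q p' q' : ℝ} (hv : v ≠ 0) (hv2 : v^2 = u)
    (hnum : p'*u + q' = p*u + q) : p'*v + q'/v = p*v + q/v := by
  have e : ∀ P Q : ℝ, P*v + Q/v = (P*u+Q)/v := by
    intro P Q; rw [← hv2]; field_simp
  rw [e, e, hnum]

lemma intPP {h : ℝ} (hh : 0 < h) (i : ℕ) :
    IntervalIntegrable (fun θ => Real.sin θ ^ i * Real.cos θ ^ 2 * Real.sqrt (uu h θ))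
      MeasureTheory.volume (-(π/2)) (π/2) :=
  (Continuous.mul (by continuity) (cont_sqrt_uu h)).intervalIntegrable _ _

lemma intQQ {h : ℝ} (hh : 0 < h) (i : ℕ) :
    IntervalIntegrable (fun θ => Real.sin θ ^ i / Real.sqrt (uu h θ))
      MeasureTheory.volume (-(π/2)) (π/2) :=
  (Continuous.div (by continuity) (cont_sqrt_uu h)
    (fun θ => (sqrt_uu_pos hh θ).ne')).intervalIntegrable _ _

lemma intRR {h : ℝ} (hh : 0 < h) (i : ℕ) :
    IntervalIntegrable
      (fun θ => Real.sin θ ^ i * Real.cos θ ^ 2 * (1 + Real.sin θ ^ 2) / Real.sqrt (uu h θ))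
      MeasureTheory.volume (-(π/2)) (π/2) :=
  (Continuous.div (by continuity) (cont_sqrt_uu h)
    (fun θ => (sqrt_uu_pos hh θ).ne')).intervalIntegrable _ _

lemma master {h : ℝ} (hh : 0 < h) (A B : ℝ) :
    (∫ θ in (-(π/2))..(π/2),
      (((A*Real.cos θ + 3*B*Real.sin θ^2*Real.cos θ)*Real.cos θ
          - (A*Real.sin θ + B*Real.sin θ^3)*Real.sin θ) * Real.sqrt (uu h θ)
        + (A*Real.sin θ + B*Real.sin θ^3)*(1+ss h)*Real.sin θ*Real.cos θ^2
            / Real.sqrt (uu h θ))) = 0 := by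
  set G : ℝ → ℝ := fun θ =>
      (((A*Real.cos θ + 3*B*Real.sin θ^2*Real.cos θ)*Real.cos θ
          - (A*Real.sin θ + B*Real.sin θ^3)*Real.sin θ) * Real.sqrt (uu h θ)
        + (A*Real.sin θ + B*Real.sin θ^3)*(1+ss h)*Real.sin θ*Real.cos θ^2
            / Real.sqrt (uu h θ)) with hG
  have hW : ∀ θ ∈ uIcc (-(π/2)) (π/2),
      HasDerivAt (fun θ => (A*Real.sin θ + B*Real.sin θ^3)*Real.cos θ*Real.sqrt (uu h θ))
        (G θ) θ := by
    intro θ _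
    have hu := uu_pos hh θ
    have hsq : HasDerivAt (fun θ : ℝ => Real.sin θ^2) (2*Real.sin θ*Real.cos θ) θ := by
      have := (Real.hasDerivAt_sin θ).pow 2
      exact this.congr_deriv (by ring)
    have du : HasDerivAt (fun θ => uu h θ) ((1+ss h)*(2*Real.sin θ*Real.cos θ)) θ := by
      simpa [uu] using (hsq.const_mul (1+ss h)).add_const (ss h - 1)
    have dv : HasDerivAt (fun θ => Real.sqrt (uu h θ))
        (1/(2*Real.sqrt (uu h θ)) * ((1+ss h)*(2*Real.sin θ*Real.cos θ))) θ :=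
      (Real.hasDerivAt_sqrt (ne_of_gt hu)).comp θ du
    have h3 : HasDerivAt (fun θ : ℝ => Real.sin θ^3) (3*Real.sin θ^2*Real.cos θ) θ := by
      have := (Real.hasDerivAt_sin θ).pow 3
      exact this.congr_deriv (by ring)
    have d1 : HasDerivAt (fun θ => A*Real.sin θ + B*Real.sin θ^3)
        (A*Real.cos θ + B*(3*Real.sin θ^2*Real.cos θ)) θ :=
      ((Real.hasDerivAt_sin θ).const_mul A).add (h3.const_mul B)
    have := (d1.mul (Real.hasDerivAt_cos θ)).mul dv
    refine this.congr_deriv ?_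
    symm
    have hvne := (sqrt_uu_pos hh θ).ne'
    rw [hG]
    simp only [Pi.mul_apply]
    field_simp
    ring
  have hcont : Continuous G := by
    rw [hG]
    apply Continuous.add
    · exact Continuous.mul (by continuity) (cont_sqrt_uu h)
    · exact Continuous.div (by continuity) (cont_sqrt_uu h) (fun θ => (sqrt_uu_pos hh θ).ne')
  rw [intervalIntegral.integral_eq_sub_of_hasDerivAt hW (hcont.intervalIntegrable _ _)]
  simp

lemma T1 {h : ℝ} (hh : 0 < h) :
    2*PP 0 h + (1+ss h)*RR 0 h = 2*ss h*QQ 0 h := by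
  have hm := master hh 1 0
  rw [PP, QQ, RR, ← integral_const_mul, ← integral_const_mul, ← integral_const_mul,
    ← integral_add ((intPP hh 0).const_mul 2) ((intRR hh 0).const_mul _),
    ← sub_eq_zero,
    ← integral_sub (((intPP hh 0).const_mul 2).add ((intRR hh 0).const_mul _))
      ((intQQ hh 0).const_mul _)]
  refine Eq.trans (integral_congr fun θ _ => ?_) hm
  have hu := uu_pos hh θ
  have hv := (sqrt_uu_pos hh θ).ne'
  have hv2 := Real.sq_sqrt hu.le
  have hsc := Real.sin_sq_add_cos_sq θ
  have shape1 : 2*(Real.sin θ^0*Real.cos θ^2*Real.sqrt (uu h θ))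
      + (1+ss h)*(Real.sin θ^0*Real.cos θ^2*(1+Real.sin θ^2)/Real.sqrt (uu h θ))
      - 2*ss h*(Real.sin θ^0/Real.sqrt (uu h θ))
      = (2*Real.cos θ^2)*Real.sqrt (uu h θ)
        + ((1+ss h)*Real.cos θ^2*(1+Real.sin θ^2) - 2*ss h)/Real.sqrt (uu h θ) := by
    field_simp; ring
  have shape2 : ((1*Real.cos θ + 3*0*Real.sin θ^2*Real.cos θ)*Real.cos θ
          - (1*Real.sin θ + 0*Real.sin θ^3)*Real.sin θ) * Real.sqrt (uu h θ)
        + (1*Real.sin θ + 0*Real.sin θ^3)*(1+ss h)*Real.sin θ*Real.cos θ^2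
            / Real.sqrt (uu h θ)
      = (Real.cos θ^2 - Real.sin θ^2)*Real.sqrt (uu h θ)
        + ((1+ss h)*Real.sin θ^2*Real.cos θ^2)/Real.sqrt (uu h θ) := by
    field_simp; ring
  rw [shape1, shape2]
  refine (frac_eq hv hv2 ?_).symm
  simp only [uu]
  linear_combination (-2*ss h - Real.sin θ^2 - Real.sin θ^2*ss h) * hsc

lemma T2 {h : ℝ} (hh : 0 < h) :
    4*PP 2 h + (1+ss h)*RR 2 h = 2*ss h*QQ 2 h := by
  have hm := master hh 0 1
  rw [PP, QQ, RR, ← integral_const_mul, ← integral_const_mul, ← integral_const_mul,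
    ← integral_add ((intPP hh 2).const_mul 4) ((intRR hh 2).const_mul _),
    ← sub_eq_zero,
    ← integral_sub (((intPP hh 2).const_mul 4).add ((intRR hh 2).const_mul _))
      ((intQQ hh 2).const_mul _)]
  refine Eq.trans (integral_congr fun θ _ => ?_) hm
  have hu := uu_pos hh θ
  have hv := (sqrt_uu_pos hh θ).ne'
  have hv2 := Real.sq_sqrt hu.le
  have hsc := Real.sin_sq_add_cos_sq θ
  have shape1 : 4*(Real.sin θ^2*Real.cos θ^2*Real.sqrt (uu h θ))
      + (1+ss h)*(Real.sin θ^2*Real.cos θ^2*(1+Real.sin θ^2)/Real.sqrt (uu h θ))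
      - 2*ss h*(Real.sin θ^2/Real.sqrt (uu h θ))
      = (4*Real.sin θ^2*Real.cos θ^2)*Real.sqrt (uu h θ)
        + ((1+ss h)*Real.sin θ^2*Real.cos θ^2*(1+Real.sin θ^2)
            - 2*ss h*Real.sin θ^2)/Real.sqrt (uu h θ) := by
    field_simp; ring
  have shape2 : ((0*Real.cos θ + 3*1*Real.sin θ^2*Real.cos θ)*Real.cos θ
          - (0*Real.sin θ + 1*Real.sin θ^3)*Real.sin θ) * Real.sqrt (uu h θ)
        + (0*Real.sin θ + 1*Real.sin θ^3)*(1+ss h)*Real.sin θ*Real.cos θ^2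
            / Real.sqrt (uu h θ)
      = (3*Real.sin θ^2*Real.cos θ^2 - Real.sin θ^4)*Real.sqrt (uu h θ)
        + ((1+ss h)*Real.sin θ^4*Real.cos θ^2)/Real.sqrt (uu h θ) := by
    field_simp; ring
  rw [shape1, shape2]
  refine (frac_eq hv hv2 ?_).symm
  simp only [uu]
  linear_combination (-2*Real.sin θ^2*ss h - Real.sin θ^4 - Real.sin θ^4*ss h) * hsc

lemma T3 {h : ℝ} (hh : 0 < h) :
    3*PP 0 h = 2*(ss h - 1)*QQ 0 h + 2*QQ 2 h := by
  have hm := master hh 1 0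
  rw [PP, QQ, QQ, ← integral_const_mul, ← integral_const_mul, ← integral_const_mul,
    ← sub_eq_zero,
    ← integral_add ((intQQ hh 0).const_mul _) ((intQQ hh 2).const_mul _),
    ← integral_sub ((intPP hh 0).const_mul 3)
      (((intQQ hh 0).const_mul _).add ((intQQ hh 2).const_mul _))]
  refine Eq.trans (integral_congr fun θ _ => ?_) hm
  have hu := uu_pos hh θ
  have hv := (sqrt_uu_pos hh θ).ne'
  have hv2 := Real.sq_sqrt hu.le
  have hsc := Real.sin_sq_add_cos_sq θ
  have shape1 : 3*(Real.sin θ^0*Real.cos θ^2*Real.sqrt (uu h θ))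
      - (2*(ss h - 1)*(Real.sin θ^0/Real.sqrt (uu h θ)) + 2*(Real.sin θ^2/Real.sqrt (uu h θ)))
      = (3*Real.cos θ^2)*Real.sqrt (uu h θ)
        + (-(2*(ss h -1)) - 2*Real.sin θ^2)/Real.sqrt (uu h θ) := by
    field_simp; ring
  have shape2 : ((1*Real.cos θ + 3*0*Real.sin θ^2*Real.cos θ)*Real.cos θ
          - (1*Real.sin θ + 0*Real.sin θ^3)*Real.sin θ) * Real.sqrt (uu h θ)
        + (1*Real.sin θ + 0*Real.sin θ^3)*(1+ss h)*Real.sin θ*Real.cos θ^2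
            / Real.sqrt (uu h θ)
      = (Real.cos θ^2 - Real.sin θ^2)*Real.sqrt (uu h θ)
        + ((1+ss h)*Real.sin θ^2*Real.cos θ^2)/Real.sqrt (uu h θ) := by
    field_simp; ring
  rw [shape1, shape2]
  refine (frac_eq hv hv2 ?_).symm
  simp only [uu]
  linear_combination (2 - 2*ss h - Real.sin θ^2 - Real.sin θ^2*ss h) * hsc

lemma T4 {h : ℝ} (hh : 0 < h) :
    5*(1+ss h)*PP 2 h = PP 0 h + 2*(ss h)^2*QQ 2 h := by
  have hm := master hh (-1) (1+ss h)
  rw [PP, PP, QQ, ← integral_const_mul, ← integral_const_mul,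
    ← sub_eq_zero,
    ← integral_add (intPP hh 0) ((intQQ hh 2).const_mul _),
    ← integral_sub ((intPP hh 2).const_mul _)
      ((intPP hh 0).add ((intQQ hh 2).const_mul _))]
  refine Eq.trans (integral_congr fun θ _ => ?_) hm
  have hu := uu_pos hh θ
  have hv := (sqrt_uu_pos hh θ).ne'
  have hv2 := Real.sq_sqrt hu.le
  have hsc := Real.sin_sq_add_cos_sq θ
  have shape1 : 5*(1+ss h)*(Real.sin θ^2*Real.cos θ^2*Real.sqrt (uu h θ))
      - (Real.sin θ^0*Real.cos θ^2*Real.sqrt (uu h θ)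
          + 2*(ss h)^2*(Real.sin θ^2/Real.sqrt (uu h θ)))
      = (5*(1+ss h)*Real.sin θ^2*Real.cos θ^2 - Real.cos θ^2)*Real.sqrt (uu h θ)
        + (-(2*(ss h)^2*Real.sin θ^2))/Real.sqrt (uu h θ) := by
    field_simp; ring
  have shape2 : (((-1)*Real.cos θ + 3*(1+ss h)*Real.sin θ^2*Real.cos θ)*Real.cos θ
          - ((-1)*Real.sin θ + (1+ss h)*Real.sin θ^3)*Real.sin θ) * Real.sqrt (uu h θ)
        + ((-1)*Real.sin θ + (1+ss h)*Real.sin θ^3)*(1+ss h)*Real.sin θ*Real.cos θ^2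
            / Real.sqrt (uu h θ)
      = (-Real.cos θ^2 + 3*(1+ss h)*Real.sin θ^2*Real.cos θ^2 + Real.sin θ^2
            - (1+ss h)*Real.sin θ^4)*Real.sqrt (uu h θ)
        + ((1+ss h)*Real.sin θ^2*Real.cos θ^2*((1+ss h)*Real.sin θ^2 - 1))/Real.sqrt (uu h θ) := by
    field_simp; ring
  rw [shape1, shape2]
  refine (frac_eq hv hv2 ?_).symm
  simp only [uu]
  linear_combination (Real.sin θ^2 - Real.sin θ^2*ss h - 2*Real.sin θ^2*(ss h)^2
    - Real.sin θ^4 - 2*Real.sin θ^4*ss h - Real.sin θ^4*(ss h)^2) * hsc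

lemma uu_ge {h : ℝ} (hh : 0 < h) (θ : ℝ) : ss h - 1 ≤ uu h θ := by
  have h1 := ss_gt_one hh
  have : 0 ≤ (1 + ss h) * Real.sin θ ^ 2 := by positivity
  unfold uu; linarith

lemma hasDerivAt_PP {h : ℝ} (hh : 0 < h) (i : ℕ) :
    HasDerivAt (PP i) ((1/ss h) * RR i h) h := by
  set s0 := ss (h/2) with hs0
  have hs0gt : 1 < s0 := ss_gt_one (by linarith)
  have key : IntervalIntegrable
        (fun θ => Real.sin θ ^ i * Real.cos θ ^ 2 * (1+Real.sin θ^2) / (ss h * Real.sqrt (uu h θ)))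
        MeasureTheory.volume (-(π/2)) (π/2) ∧
      HasDerivAt (fun x => ∫ θ in (-(π/2))..(π/2),
          Real.sin θ ^ i * Real.cos θ ^ 2 * Real.sqrt (uu x θ))
        (∫ θ in (-(π/2))..(π/2),
          Real.sin θ ^ i * Real.cos θ ^ 2 * (1+Real.sin θ^2) / (ss h * Real.sqrt (uu h θ))) h := by
    apply intervalIntegral.hasDerivAt_integral_of_dominated_loc_of_deriv_le
      (F := fun x θ => Real.sin θ ^ i * Real.cos θ ^ 2 * Real.sqrt (uu x θ))
      (F' := fun x θ => Real.sin θ ^ i * Real.cos θ ^ 2 * (1+Real.sin θ^2) / (ss x * Real.sqrt (uu x θ)))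
      (bound := fun _ => 2 / (s0 * Real.sqrt (s0 - 1)))
      (Metric.ball_mem_nhds h (half_pos hh))
    · filter_upwards with x
      exact (Continuous.mul (by continuity) (cont_sqrt_uu x)).aestronglyMeasurable
    · exact (Continuous.mul (by continuity) (cont_sqrt_uu h)).intervalIntegrable _ _
    · apply Continuous.aestronglyMeasurable
      apply Continuous.div (by continuity)
      · exact continuous_const.mul (cont_sqrt_uu h)
      · intro θ
        exact (mul_pos (ss_pos hh) (sqrt_uu_pos hh θ)).ne'
    · filter_upwards with θ _
      intro x hx
      have hx2 : h/2 < x := by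
        rw [Metric.mem_ball, Real.dist_eq, abs_lt] at hx
        linarith
      have hxpos : 0 < x := by linarith
      have hsx : s0 ≤ ss x := ss_mono (by linarith)
      have hspos : 0 < ss x := ss_pos hxpos
      have huge : s0 - 1 ≤ uu x θ := le_trans (by linarith) (uu_ge hxpos θ)
      have hsq : Real.sqrt (s0 - 1) ≤ Real.sqrt (uu x θ) := Real.sqrt_le_sqrt huge
      have hsqpos : 0 < Real.sqrt (s0 - 1) := Real.sqrt_pos.2 (by linarith)
      have hden : s0 * Real.sqrt (s0 - 1) ≤ ss x * Real.sqrt (uu x θ) := by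
        apply mul_le_mul hsx hsq hsqpos.le hspos.le
      have hdenpos : 0 < s0 * Real.sqrt (s0 - 1) := by positivity
      rw [norm_div, Real.norm_eq_abs, Real.norm_eq_abs]
      rw [abs_of_pos (lt_of_lt_of_le hdenpos hden)]
      apply div_le_div₀ _ _ hdenpos hden
      · positivity
      · have h1 : |Real.sin θ ^ i| ≤ 1 := by
          rw [abs_pow]
          exact pow_le_one₀ (abs_nonneg _) (Real.abs_sin_le_one θ)
        have h2 : |Real.cos θ ^ 2| ≤ 1 := by
          rw [abs_pow]
          exact pow_le_one₀ (abs_nonneg _) (Real.abs_cos_le_one θ)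
        have h3 : |1 + Real.sin θ^2| ≤ 2 := by
          rw [abs_of_nonneg (by positivity)]
          nlinarith [Real.sin_sq_le_one θ]
        calc |Real.sin θ ^ i * Real.cos θ ^ 2 * (1+Real.sin θ^2)|
            = |Real.sin θ ^ i| * |Real.cos θ ^ 2| * |1+Real.sin θ^2| := by
              rw [abs_mul, abs_mul]
          _ ≤ 1 * 1 * 2 := by
              apply mul_le_mul (mul_le_mul h1 h2 (abs_nonneg _) (by norm_num)) h3 (abs_nonneg _)
              norm_num
          _ = 2 := by norm_num
    · exact intervalIntegrable_const
    · filter_upwards with θ _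
      intro x hx
      have hx2 : h/2 < x := by
        rw [Metric.mem_ball, Real.dist_eq, abs_lt] at hx
        linarith
      have hxpos : 0 < x := by linarith
      have hupos := uu_pos hxpos θ
      have hspos := ss_pos hxpos
      have du : HasDerivAt (fun x => uu x θ)
          ((2/ss x) * Real.sin θ^2 + 2/ss x) x := by
        have h1 : HasDerivAt (fun x => (1 + ss x) * Real.sin θ ^ 2)
            ((2/ss x) * Real.sin θ^2) x := by
          have := ((hasDerivAt_ss hxpos).const_add 1).mul_const (Real.sin θ ^ 2)
          simpa using this
        have h2 : HasDerivAt (fun x => ss x - 1) (2/ss x) x :=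
          (hasDerivAt_ss hxpos).sub_const 1
        exact h1.add h2
      have dv : HasDerivAt (fun x => Real.sqrt (uu x θ))
          (1/(2*Real.sqrt (uu x θ)) * ((2/ss x) * Real.sin θ^2 + 2/ss x)) x :=
        (Real.hasDerivAt_sqrt (ne_of_gt hupos)).comp x du
      have := dv.const_mul (Real.sin θ ^ i * Real.cos θ ^ 2)
      refine this.congr_deriv ?_
      symm
      have hsqp := (sqrt_uu_pos hxpos θ).ne'
      field_simp
      ring
  have := key.2
  have hr : (∫ θ in (-(π/2))..(π/2),
      Real.sin θ ^ i * Real.cos θ ^ 2 * (1+Real.sin θ^2) / (ss h * Real.sqrt (uu h θ)))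
      = (1/ss h) * RR i h := by
    rw [RR, ← integral_const_mul]
    apply integral_congr
    intro θ _
    field_simp
  rwa [hr] at this

noncomputable def q0 (h : ℝ) : ℝ := Real.sqrt 2 * QQ 0 h
noncomputable def q2 (h : ℝ) : ℝ := Real.sqrt 2 * (1 + ss h) * QQ 2 h


lemma sqrt2_sq : Real.sqrt 2 * Real.sqrt 2 = 2 := Real.mul_self_sqrt (by norm_num)
lemma sqrt2_ne : Real.sqrt 2 ≠ 0 := by positivity

lemma ellI0_eq {h : ℝ} (hh : 0 < h) : ellI 0 h = (1 + ss h) / Real.sqrt 2 * PP 0 h := by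
  have := ellI_eq 0 hh
  rwa [show (0+2) = 2 from rfl, xmax_sq] at this

lemma ellI2_eq {h : ℝ} (hh : 0 < h) : ellI 2 h = (1 + ss h)^2 / Real.sqrt 2 * PP 2 h := by
  have := ellI_eq 2 hh
  rwa [show (2+2) = 2*2 from rfl, pow_mul, xmax_sq] at this

lemma hasDerivAt_ellI0 {h : ℝ} (hh : 0 < h) : HasDerivAt (ellI 0) (q0 h) h := by
  have heq : ellI 0 =ᶠ[nhds h] (fun x => (1 + ss x) / Real.sqrt 2 * PP 0 x) := by
    filter_upwards [isOpen_Ioi.mem_nhds (show h ∈ Ioi (0:ℝ) from hh)] with x hx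
    exact ellI0_eq hx
  apply HasDerivAt.congr_of_eventuallyEq _ heq
  have hd := (((hasDerivAt_ss hh).const_add 1).div_const (Real.sqrt 2)).mul (hasDerivAt_PP hh 0)
  refine hd.congr_deriv ?_
  symm
  have hs := (ss_pos hh).ne'
  have ht1 := T1 hh
  field_simp [q0]
  have hq : q0 h = √2 * QQ 0 h := rfl
  linear_combination (ss h * √2) * hq - ht1 + (ss h * QQ 0 h) * sqrt2_sq

lemma hasDerivAt_ellI2 {h : ℝ} (hh : 0 < h) : HasDerivAt (ellI 2) (q2 h) h := by
  have heq : ellI 2 =ᶠ[nhds h] (fun x => (1 + ss x)^2 / Real.sqrt 2 * PP 2 x) := by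
    filter_upwards [isOpen_Ioi.mem_nhds (show h ∈ Ioi (0:ℝ) from hh)] with x hx
    exact ellI2_eq hx
  apply HasDerivAt.congr_of_eventuallyEq _ heq
  have hsq : HasDerivAt (fun x => (1 + ss x)^2 / Real.sqrt 2)
      ((2*(1+ss h)*(2/ss h))/Real.sqrt 2) h := by
    have := (((hasDerivAt_ss hh).const_add 1).pow 2).div_const (Real.sqrt 2)
    refine this.congr_deriv ?_
    symm
    ring
  have hd := hsq.mul (hasDerivAt_PP hh 2)
  refine hd.congr_deriv ?_
  symm
  have hs := (ss_pos hh).ne'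
  have ht2 := T2 hh
  field_simp [q2]
  have hq : q2 h = √2 * (1 + ss h) * QQ 2 h := rfl
  linear_combination (ss h * √2) * hq - (1+ss h)*ht2 + (ss h*(1+ss h)*QQ 2 h)*sqrt2_sq

lemma idI {h : ℝ} (hh : 0 < h) : 3 * ellI 0 h = 4*h*q0 h + q2 h := by
  rw [ellI0_eq hh, q0, q2]
  have h4 : 4*h = ss h^2 - 1 := by have := ss_sq hh; linarith
  have ht3 := T3 hh
  rw [h4]
  field_simp
  linear_combination (1+ss h)*ht3 - ((ss h^2-1)*QQ 0 h + (1+ss h)*QQ 2 h)*sqrt2_sq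

lemma idII {h : ℝ} (hh : 0 < h) : 5 * ellI 2 h = ellI 0 h + (4*h+1)*q2 h := by
  rw [ellI2_eq hh, ellI0_eq hh, q2]
  have h4 : 4*h+1 = ss h^2 := by have := ss_sq hh; linarith
  have ht4 := T4 hh
  rw [h4]
  field_simp
  linear_combination (1+ss h)*ht4 - (ss h^2*(1+ss h)*QQ 2 h)*sqrt2_sq

/-- Hypergeometric Picard-Fuchs equation: `I₀` is twice differentiable on `(0,∞)` and
`4h(4h+1) I₀'' = -3 I₀` there. -/
theorem picard_fuchs_second_order (h : ℝ) (hh : 0 < h) :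
    DifferentiableAt ℝ (ellI 0) h ∧ DifferentiableAt ℝ (deriv (ellI 0)) h ∧
      4*h*(4*h + 1) * deriv (deriv (ellI 0)) h = -3 * ellI 0 h := by
  have hmem : Ioi (0:ℝ) ∈ nhds h := isOpen_Ioi.mem_nhds hh
  -- q2 derivative
  have hq2d : HasDerivAt q2 ((q2 h - q0 h)/(4*h+1)) h := by
    have heq : q2 =ᶠ[nhds h] (fun x => (5*ellI 2 x - ellI 0 x)/(4*x+1)) := by
      filter_upwards [hmem] with x hx
      have := idII hx
      have hx0 : (0:ℝ) < x := hx
      have hx1 : (4*x+1) ≠ 0 := by linarith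
      field_simp
      linarith [idII hx]
    apply HasDerivAt.congr_of_eventuallyEq _ heq
    have hnum := ((hasDerivAt_ellI2 hh).const_mul 5).sub (hasDerivAt_ellI0 hh)
    have hden : HasDerivAt (fun x : ℝ => 4*x+1) 4 h := by
      simpa using ((hasDerivAt_id h).const_mul 4).add_const 1
    have hd := hnum.div hden (by positivity : (4*h+1) ≠ 0)
    refine hd.congr_deriv ?_
    symm
    have h1 : (4*h+1) ≠ 0 := by positivity
    have e2 : 5*ellI 2 h - ellI 0 h = (4*h+1)*q2 h := by linarith [idII hh]
    field_simp
    have hX : ((fun y => 5 * ellI 2 y) - ellI 0) h = 5 * ellI 2 h - ellI 0 h := rfl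
    linear_combination 4 * e2 + 4 * hX
  -- q0 derivative
  have hq0d : HasDerivAt q0 ((-(q0 h) - (q2 h - q0 h)/(4*h+1))/(4*h)) h := by
    have heq : q0 =ᶠ[nhds h] (fun x => (3*ellI 0 x - q2 x)/(4*x)) := by
      filter_upwards [hmem] with x hx
      have hx0 : (0:ℝ) < x := hx
      have hx1 : (4*x) ≠ 0 := by linarith
      field_simp
      linarith [idI hx]
    apply HasDerivAt.congr_of_eventuallyEq _ heq
    have hnum := ((hasDerivAt_ellI0 hh).const_mul 3).sub hq2d
    have hden : HasDerivAt (fun x : ℝ => 4*x) 4 h := by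
      simpa using (hasDerivAt_id h).const_mul 4
    have hd := hnum.div hden (by positivity : (4*h) ≠ 0)
    refine hd.congr_deriv ?_
    symm
    have h1 : (4*h) ≠ 0 := by positivity
    have h2 : (4*h+1) ≠ 0 := by positivity
    have e1 : 3*ellI 0 h - q2 h = 4*h*q0 h := by linarith [idI hh]
    field_simp
    have hX : ((fun y => 3 * ellI 0 y) - q2) h = 3 * ellI 0 h - q2 h := rfl
    linear_combination (4*h+1) * e1 + (4*h+1) * hX
  -- deriv (ellI 0) agrees with q0 near h
  have hdeq : deriv (ellI 0) =ᶠ[nhds h] q0 := by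
    filter_upwards [hmem] with x hx
    exact (hasDerivAt_ellI0 hx).deriv
  refine ⟨(hasDerivAt_ellI0 hh).differentiableAt, ?_, ?_⟩
  · exact (hq0d.congr_of_eventuallyEq hdeq).differentiableAt
  · have : deriv (deriv (ellI 0)) h = deriv q0 h := Filter.EventuallyEq.deriv_eq hdeq
    rw [this, hq0d.deriv]
    have h1 : (4*h) ≠ 0 := by positivity
    have h2 : (4*h+1) ≠ 0 := by positivity
    have e1 : 3*ellI 0 h = 4*h*q0 h + q2 h := idI hh
    field_simp
    linear_combination e1
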